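/- Let $\vec{n}_1$ and $\vec{n}_2$ be dimension vectors of the same length $N+1$ with ordered versions satisfying $\tilde{n}_{1,i} \ge \tilde{n}_{2,i}$ for all $i = 0, \ldots, N$ (componentwise domination of ordered versions). Then for every $i \in \{1, \ldots, \min_j \tilde{n}_{2,j}\}$, the coefficient $c_i(\vec{n}_1) \ge c_i(\vec{n}_2)$, where $c_i(\vec{n}) = 1 - i + \min_{k=1,\ldots,N} \lfloor (\sum_{l=0}^{k} \tilde{n}_l - i)/k \rfloor$. Consequently the diversity values satisfy $\sum_{i=k+1}^{n_{\min,2}} c_i(\vec{n}_1) \ge \sum_{i=k+1}^{n_{\min,2}} c_i(\vec{n}_2)$ for every integer $k$. -/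

import Mathlib

/-- Monotonicity of the Rayleigh product channel DMT: if the ordered
dimension vector `n₁` dominates `n₂` componentwise, then the coefficients satisfy
`c_i(n₁) ≥ c_i(n₂)` for `1 ≤ i ≤ min n₂`, and hence the diversity values
`∑_{i=k+1}^{n_{min,2}} c_i` are ordered accordingly for every integer `k`. -/
theorem rp_dmt_monotone (N : ℕ) (hN : 1 ≤ N) (n₁ n₂ : ℕ → ℤ)
    (hpos₁ : ∀ l, l ≤ N → 0 < n₁ l) (hmono₁ : ∀ l, l < N → n₁ l ≤ n₁ (l + 1))
    (hpos₂ : ∀ l, l ≤ N → 0 < n₂ l) (hmono₂ : ∀ l, l < N → n₂ l ≤ n₂ (l + 1))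
    (hdom : ∀ l, l ≤ N → n₂ l ≤ n₁ l)
    (c₁ c₂ : ℤ → ℤ)
    (hc₁ : ∀ i : ℤ, c₁ i = 1 - i +
      (Finset.Icc 1 N).inf' (Finset.nonempty_Icc.mpr hN)
        (fun k => Int.fdiv ((∑ l ∈ Finset.range (k + 1), n₁ l) - i) (k : ℤ)))
    (hc₂ : ∀ i : ℤ, c₂ i = 1 - i +
      (Finset.Icc 1 N).inf' (Finset.nonempty_Icc.mpr hN)
        (fun k => Int.fdiv ((∑ l ∈ Finset.range (k + 1), n₂ l) - i) (k : ℤ))) :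
    (∀ i : ℤ, 1 ≤ i → i ≤ n₂ 0 → c₂ i ≤ c₁ i)
    ∧ ∀ k : ℤ, (∑ i ∈ Finset.Icc (k + 1) (n₂ 0), c₂ i)
        ≤ ∑ i ∈ Finset.Icc (k + 1) (n₂ 0), c₁ i := by
  have key : ∀ i : ℤ, c₂ i ≤ c₁ i := by
    intro i
    rw [hc₁ i, hc₂ i]
    refine add_le_add_right ?_ _
    apply Finset.le_inf'
    intro k hk
    refine le_trans (Finset.inf'_le _ hk) ?_
    simp only [Finset.mem_Icc] at hk
    have hkpos : (0:ℤ) < (k:ℤ) := by exact_mod_cast hk.1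
    have hsum : (∑ l ∈ Finset.range (k + 1), n₂ l) ≤ ∑ l ∈ Finset.range (k + 1), n₁ l :=
      Finset.sum_le_sum fun l hl => hdom l (by
        have := Finset.mem_range.mp hl; omega)
    rw [Int.fdiv_eq_ediv_of_nonneg _ hkpos.le, Int.fdiv_eq_ediv_of_nonneg _ hkpos.le]
    exact Int.ediv_le_ediv hkpos (by linarith)
  exact ⟨fun i _ _ => key i, fun k => Finset.sum_le_sum fun i _ => key i⟩
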